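/- For all integers m ≥ 0 and n ≥ 0, the hyperharmonic number H_n^{(m+1)} satisfies H_n^{(m+1)} = ∑_{k=0}^{n} H_k · C(m+n-k-1, n-k), as an identity of rational numbers. -/

import Mathlib

/-- The hyperharmonic numbers `H_n^{(r)}` of Conway and Guy:
`H_0^{(r)} = 0` for all `r ≥ 0`, `H_n^{(0)} = 1/n` for `n ≥ 1`, and
`H_n^{(r)} = ∑_{k=1}^{n} H_k^{(r-1)}` for `n, r ≥ 1`. -/
def hyperharmonic : ℕ → ℕ → ℚ
  | 0, n => if n = 0 then 0 else (n : ℚ)⁻¹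
  | r + 1, n => ∑ k ∈ Finset.Icc 1 n, hyperharmonic r k

lemma choose_aux (m N : ℕ) :
    ∑ i ∈ Finset.range (N + 1), (m + i - 1).choose i = (m + N).choose N := by
  induction N with
  | zero => simp
  | succ N ih =>
      rw [Finset.sum_range_succ, ih]
      have h1 : m + (N + 1) - 1 = m + N := by omega
      have h2 : m + (N + 1) = (m + N) + 1 := by omega
      rw [h1, h2, Nat.choose_succ_succ']

lemma hyperharmonic_one (n : ℕ) : hyperharmonic 1 n = harmonic n := by
  rw [hyperharmonic, harmonic, Finset.range_eq_Ico, Finset.sum_Ico_eq_sum_range]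
  rw [← Finset.Ico_add_one_right_eq_Icc, Finset.sum_Ico_eq_sum_range]
  refine Finset.sum_congr rfl fun x _ => ?_
  rw [hyperharmonic, if_neg (by omega)]
  push_cast
  ring

lemma hyper_aux (m : ℕ) : ∀ n : ℕ, hyperharmonic (m + 1) n =
    ∑ k ∈ Finset.range (n + 1), harmonic k * ((m + n - k - 1).choose (n - k) : ℚ) := by
  induction m with
  | zero =>
      intro n
      rw [hyperharmonic_one, Finset.sum_eq_single n]
      · simp
      · intro k hk hkn
        have hk' : k < n := by simp at hk; omega
        have : (0 + n - k - 1).choose (n - k) = 0 :=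
          Nat.choose_eq_zero_of_lt (by omega)
        rw [this]; simp
      · intro h; simp at h
  | succ m ih =>
      intro n
      show (∑ j ∈ Finset.Icc 1 n, hyperharmonic (m + 1) j) = _
      calc (∑ j ∈ Finset.Icc 1 n, hyperharmonic (m + 1) j)
          = ∑ j ∈ Finset.range (n + 1), hyperharmonic (m + 1) j := by
            rw [Finset.range_eq_Ico, Finset.sum_eq_sum_Ico_succ_bot (by omega),
              ← Finset.Ico_add_one_right_eq_Icc]
            simp [hyperharmonic]
        _ = ∑ j ∈ Finset.range (n + 1), ∑ k ∈ Finset.range (j + 1),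
              harmonic k * ((m + j - k - 1).choose (j - k) : ℚ) :=
            Finset.sum_congr rfl fun j _ => ih j
        _ = ∑ k ∈ Finset.range (n + 1), ∑ j ∈ Finset.Ico k (n + 1),
              harmonic k * ((m + j - k - 1).choose (j - k) : ℚ) := by
            rw [Finset.range_eq_Ico,
              Finset.sum_Ico_Ico_comm 0 (n + 1)
                (fun k j => harmonic k * ((m + j - k - 1).choose (j - k) : ℚ))]
            simp only [Finset.range_eq_Ico]
        _ = _ := by
            refine Finset.sum_congr rfl fun k hk => ?_
            have hkn : k ≤ n := by simp at hk; omega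
            rw [← Finset.mul_sum]
            congr 1
            rw [Finset.sum_Ico_eq_sum_range]
            have h1 : n + 1 - k = (n - k) + 1 := by omega
            rw [h1]
            have hnat : ∑ i ∈ Finset.range ((n - k) + 1),
                (m + (k + i) - k - 1).choose (k + i - k) = (m + 1 + n - k - 1).choose (n - k) := by
              have h2 : m + 1 + n - k - 1 = m + (n - k) := by omega
              rw [h2, ← choose_aux m (n - k)]
              exact Finset.sum_congr rfl fun i _ => by congr 1 <;> omega
            rw [← Nat.cast_sum, hnat]

/-- For all integers `m, n ≥ 0`,
`H_n^{(m+1)} = ∑_{k=0}^{n} H_k ⬝ C(m+n-k-1, n-k)` as rational numbers. -/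
theorem hyperharmonic_eq_sum_harmonic (m n : ℕ) :
    hyperharmonic (m + 1) n =
      ∑ k ∈ Finset.range (n + 1), harmonic k * ((m + n - k - 1).choose (n - k) : ℚ) := by
  exact hyper_aux m n
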